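/- arXiv:2204.13335 — 9 statements merged into one kernel-verified Lean document; each statement's English description precedes it below -/
import Mathlib

section
/- Let (Ω, 𝒜, μ) be a measure space and let p_E, p_G : Ω → ℝ be measurable and nonnegative. Define D* : Ω → ℝ by D*(x) = p_E(x)/(p_E(x) + p_G(x)) when p_E(x) + p_G(x) > 0 and D*(x) = 0 otherwise. Then for every measurable D : Ω → ℝ, the lower Lebesgue integral ∫⁻ ((D(x) − 1)²·p_E(x) + D(x)²·p_G(x)) dμ(x) (of the nonnegative integrand, taking values in [0, ∞]) is at least ∫⁻ ((D*(x) − 1)²·p_E(x) + D*(x)²·p_G(x)) dμ(x). That is, D* minimizes the discriminator objective of the bidirectional least-squares GAN over all measurable discriminators. -/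
open MeasureTheory

/-- The discriminator `D*(x) = p_E(x)/(p_E(x) + p_G(x))` (with value `0` when the
denominator is `0`, which is Lean's division convention) minimizes the bidirectional
least-squares GAN discriminator objective
`∫⁻ ((D − 1)²·p_E + D²·p_G) dμ` over all measurable discriminators `D`. -/
theorem lsgan_optimal_discriminator
    {Ω : Type*} [MeasurableSpace Ω] (μ : Measure Ω)
    (pE pG : Ω → ℝ) (hmE : Measurable pE) (hmG : Measurable pG)
    (h0E : ∀ x, 0 ≤ pE x) (h0G : ∀ x, 0 ≤ pG x)
    (Dstar : Ω → ℝ) (hDstar : ∀ x, Dstar x = pE x / (pE x + pG x))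
    (D : Ω → ℝ) (hD : Measurable D) :
    ∫⁻ x, ENNReal.ofReal ((Dstar x - 1) ^ 2 * pE x + (Dstar x) ^ 2 * pG x) ∂μ ≤
      ∫⁻ x, ENNReal.ofReal ((D x - 1) ^ 2 * pE x + (D x) ^ 2 * pG x) ∂μ := by
  refine lintegral_mono fun x => ENNReal.ofReal_le_ofReal ?_
  set a := pE x with ha
  set b := pG x with hb
  have h0a := h0E x
  have h0b := h0G x
  rw [hDstar x, ← ha, ← hb]
  rcases eq_or_lt_of_le (add_nonneg h0a h0b) with h | h
  · have haz : a = 0 := by linarith [h0a, h0b]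
    have hbz : b = 0 := by linarith
    simp [haz, hbz]
  · have hne : a + b ≠ 0 := ne_of_gt h
    have key : a / (a + b) * (a + b) = a := div_mul_cancel₀ a hne
    nlinarith [sq_nonneg (D x - a / (a + b)), mul_nonneg (le_of_lt h) (sq_nonneg (D x - a / (a + b)))]
end

section
/- Let (Ω, 𝒜, μ) be a measure space and let p_E, p_G : Ω → ℝ be densities, i.e., measurable, nonnegative, integrable, with ∫ p_E dμ = 1 and ∫ p_G dμ = 1. Define D* : Ω → ℝ by D*(x) = p_E(x)/(p_E(x) + p_G(x)) when p_E(x) + p_G(x) > 0 and D*(x) = 0 otherwise, and define the generator–encoder objective J = ∫ ((D*(x) − 1/2)²·p_E(x) + (D*(x) − 1/2)²·p_G(x)) dμ(x). Then J ≥ 0, and J = 0 if and only if p_E = p_G μ-almost everywhere. (Lemma 1: under the least-squares updating rules, the generator-induced and encoder-induced joint distributions of the bidirectional LSGAN coincide exactly at the optimum of the generator–encoder objective evaluated at the optimal discriminator.) -/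
open MeasureTheory

/-- Lemma 1: for densities `p_E, p_G`, the generator–encoder objective of the
bidirectional LSGAN evaluated at the optimal discriminator
`D* = p_E/(p_E + p_G)` (value `0` where the denominator vanishes),
`J = ∫ ((D* − 1/2)²·p_E + (D* − 1/2)²·p_G) dμ`, is nonnegative and vanishes
iff `p_E = p_G` μ-almost everywhere. -/
theorem lsgan_ge_objective_min_iff
    {Ω : Type*} [MeasurableSpace Ω] (μ : Measure Ω)
    (pE pG : Ω → ℝ) (hmE : Measurable pE) (hmG : Measurable pG)
    (h0E : ∀ x, 0 ≤ pE x) (h0G : ∀ x, 0 ≤ pG x)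
    (hiE : Integrable pE μ) (hiG : Integrable pG μ)
    (hE1 : ∫ x, pE x ∂μ = 1) (hG1 : ∫ x, pG x ∂μ = 1)
    (Dstar : Ω → ℝ) (hDstar : ∀ x, Dstar x = pE x / (pE x + pG x))
    (J : ℝ)
    (hJ : J = ∫ x, ((Dstar x - 1 / 2) ^ 2 * pE x + (Dstar x - 1 / 2) ^ 2 * pG x) ∂μ) :
    0 ≤ J ∧ (J = 0 ↔ pE =ᵐ[μ] pG) := by
  set f : Ω → ℝ := fun x => (Dstar x - 1 / 2) ^ 2 * pE x + (Dstar x - 1 / 2) ^ 2 * pG x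
    with hf
  have hD01 : ∀ x, 0 ≤ Dstar x ∧ Dstar x ≤ 1 := by
    intro x
    rw [hDstar x]
    rcases eq_or_lt_of_le (add_nonneg (h0E x) (h0G x)) with h | h
    · simp [← h]
    · exact ⟨div_nonneg (h0E x) h.le, by rw [div_le_one h]; linarith [h0G x]⟩
  have hfnn : ∀ x, 0 ≤ f x := fun x =>
    add_nonneg (mul_nonneg (sq_nonneg _) (h0E x)) (mul_nonneg (sq_nonneg _) (h0G x))
  have hmeas : AEStronglyMeasurable f μ := by
    have hDs : Dstar = fun x => pE x / (pE x + pG x) := funext hDstar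
    rw [hf, hDs]
    exact (((((hmE.div (hmE.add hmG)).sub measurable_const).pow measurable_const).mul
      hmE).add ((((hmE.div (hmE.add hmG)).sub measurable_const).pow
      measurable_const).mul hmG)).aestronglyMeasurable
  have hint : Integrable f μ := by
    refine Integrable.mono ((hiE.add hiG).const_mul (1 / 4)) hmeas ?_
    filter_upwards with x
    have h1 : (Dstar x - 1 / 2) ^ 2 ≤ 1 / 4 := by
      obtain ⟨ha, hb⟩ := hD01 x; nlinarith
    have hs : (0:ℝ) ≤ 1 / 4 * (pE x + pG x) := by
      have := h0E x; have := h0G x; positivity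
    simp only [Pi.add_apply]
    rw [Real.norm_eq_abs, Real.norm_eq_abs, abs_of_nonneg (hfnn x), abs_of_nonneg hs]
    simp only [hf]
    nlinarith [h0E x, h0G x, sq_nonneg (Dstar x - 1 / 2)]
  have key : ∀ x, f x = 0 ↔ pE x = pG x := by
    intro x
    rcases eq_or_lt_of_le (add_nonneg (h0E x) (h0G x)) with h | h
    · have hE0 : pE x = 0 := le_antisymm (by linarith [h0G x]) (h0E x)
      have hG0 : pG x = 0 := by linarith [h0E x]
      simp [hf, hE0, hG0]
    · have hsne : pE x + pG x ≠ 0 := ne_of_gt h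
      have hD : Dstar x - 1 / 2 = (pE x - pG x) / (2 * (pE x + pG x)) := by
        rw [hDstar x]; field_simp; ring
      have hfx : f x = (pE x - pG x) ^ 2 / (4 * (pE x + pG x)) := by
        simp only [hf, hD]
        field_simp
        ring
      rw [hfx]
      constructor
      · intro h0
        have h4 : (0:ℝ) < 4 * (pE x + pG x) := by linarith
        field_simp at h0
        linarith [(pow_eq_zero_iff two_ne_zero).mp (h0.trans (mul_zero _))]
      · intro h0; rw [h0]; simp
  rw [hJ]
  have hnn : 0 ≤ ∫ x, f x ∂μ := integral_nonneg hfnn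
  refine ⟨hnn, ?_⟩
  rw [integral_eq_zero_iff_of_nonneg hfnn hint]
  constructor
  · intro h
    filter_upwards [h] with x hx
    exact (key x).mp hx
  · intro h
    filter_upwards [h] with x hx
    exact (key x).mpr hx
end

section
/- Let (Ω, 𝒜, μ) be a measure space and let p⁺, p⁻, p_G : Ω → ℝ be measurable and nonnegative. Define D* : Ω → ℝ by D*(x) = p⁺(x)/(p⁺(x) + p⁻(x) + p_G(x)) when p⁺(x) + p⁻(x) + p_G(x) > 0 and D*(x) = 0 otherwise. Then for every measurable D : Ω → ℝ, the lower Lebesgue integral ∫⁻ ((D(x) − 1)²·p⁺(x) + D(x)²·p⁻(x) + D(x)²·p_G(x)) dμ(x) is at least ∫⁻ ((D*(x) − 1)²·p⁺(x) + D*(x)²·p⁻(x) + D*(x)²·p_G(x)) dμ(x). That is, D* minimizes the anomaly-aware discriminator objective over all measurable discriminators. -/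
open MeasureTheory

/-- The discriminator `D*(x) = p⁺(x)/(p⁺(x) + p⁻(x) + p_G(x))` (value `0` where the
denominator vanishes, Lean's division convention) minimizes the anomaly-aware
bidirectional LSGAN discriminator objective
`∫⁻ ((D − 1)²·p⁺ + D²·p⁻ + D²·p_G) dμ` over all measurable discriminators. -/
theorem anomaly_aware_optimal_discriminator
    {Ω : Type*} [MeasurableSpace Ω] (μ : Measure Ω)
    (pp pm pg : Ω → ℝ) (hmp : Measurable pp) (hmm : Measurable pm) (hmg : Measurable pg)
    (h0p : ∀ x, 0 ≤ pp x) (h0m : ∀ x, 0 ≤ pm x) (h0g : ∀ x, 0 ≤ pg x)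
    (Dstar : Ω → ℝ) (hDstar : ∀ x, Dstar x = pp x / (pp x + pm x + pg x))
    (D : Ω → ℝ) (hD : Measurable D) :
    ∫⁻ x, ENNReal.ofReal
        ((Dstar x - 1) ^ 2 * pp x + (Dstar x) ^ 2 * pm x + (Dstar x) ^ 2 * pg x) ∂μ ≤
      ∫⁻ x, ENNReal.ofReal
        ((D x - 1) ^ 2 * pp x + (D x) ^ 2 * pm x + (D x) ^ 2 * pg x) ∂μ := by
  refine lintegral_mono fun x => ENNReal.ofReal_le_ofReal ?_
  have hp := h0p x; have hm := h0m x; have hg := h0g x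
  rw [hDstar x]
  rcases eq_or_lt_of_le (by linarith : (0:ℝ) ≤ pp x + pm x + pg x) with hs | hs
  · have h1 : pp x = 0 := by linarith
    have h2 : pm x = 0 := by linarith
    have h3 : pg x = 0 := by linarith
    simp [h1, h2, h3]
  · have hne : pp x + pm x + pg x ≠ 0 := ne_of_gt hs
    have key : pp x / (pp x + pm x + pg x) * (pp x + pm x + pg x) = pp x :=
      div_mul_cancel₀ _ hne
    nlinarith [mul_nonneg hs.le (sq_nonneg (D x - pp x / (pp x + pm x + pg x))), key,
      sq_nonneg (D x - pp x / (pp x + pm x + pg x))]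
end

section
/- Let (Ω, 𝒜, μ) be a measure space and let p⁺, p⁻, p_G : Ω → ℝ be measurable, nonnegative and integrable, with ∫ p⁻ dμ = 1. Assume the supports are disjoint in the sense that p⁺(x)·p⁻(x) = 0 for μ-almost every x. Define D*(x) = p⁺(x)/(p⁺(x) + p⁻(x) + p_G(x)) (with D*(x) = 0 when the denominator is 0). Then ∫ (D*(x) − 1/2)²·(p⁺(x) + p⁻(x) + p_G(x)) dμ(x) = (1/4)·∫_{\{p⁺ > 0\}} (p⁺(x) − p_G(x))²/(p⁺(x) + p_G(x)) dμ(x) + (1/4)·∫_{\{p⁺ = 0\}} p_G(x) dμ(x) + 1/4. (Decomposition of the anomaly-aware generator–encoder objective at the optimal discriminator under disjoint supports.) -/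
open MeasureTheory

/-- Decomposition of the anomaly-aware generator–encoder objective at the optimal
discriminator under disjoint supports: if `p⁺·p⁻ = 0` μ-a.e. and `∫ p⁻ dμ = 1`, then
`∫ (D* − 1/2)²·(p⁺ + p⁻ + p_G) dμ
  = (1/4)·∫_{p⁺ > 0} (p⁺ − p_G)²/(p⁺ + p_G) dμ + (1/4)·∫_{p⁺ = 0} p_G dμ + 1/4`,
where `D* = p⁺/(p⁺ + p⁻ + p_G)` (value `0` where the denominator vanishes). -/
theorem anomaly_aware_objective_decomposition
    {Ω : Type*} [MeasurableSpace Ω] (μ : Measure Ω)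
    (pp pm pg : Ω → ℝ) (hmp : Measurable pp) (hmm : Measurable pm) (hmg : Measurable pg)
    (h0p : ∀ x, 0 ≤ pp x) (h0m : ∀ x, 0 ≤ pm x) (h0g : ∀ x, 0 ≤ pg x)
    (hip : Integrable pp μ) (him : Integrable pm μ) (hig : Integrable pg μ)
    (hm1 : ∫ x, pm x ∂μ = 1)
    (hdisj : ∀ᵐ x ∂μ, pp x * pm x = 0)
    (Dstar : Ω → ℝ) (hDstar : ∀ x, Dstar x = pp x / (pp x + pm x + pg x)) :
    ∫ x, (Dstar x - 1 / 2) ^ 2 * (pp x + pm x + pg x) ∂μ =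
      (1 / 4) * ∫ x in {x | 0 < pp x}, (pp x - pg x) ^ 2 / (pp x + pg x) ∂μ +
      (1 / 4) * ∫ x in {x | pp x = 0}, pg x ∂μ + 1 / 4 := by
  have hS : MeasurableSet {x | 0 < pp x} := measurableSet_lt measurable_const hmp
  have hcompl : {x | 0 < pp x}ᶜ = {x | pp x = 0} := by
    ext x
    simp only [Set.mem_compl_iff, Set.mem_setOf_eq, not_lt]
    exact ⟨fun h => le_antisymm h (h0p x), fun h => h.le⟩
  simp only [hDstar]
  have hsm : Measurable fun x => pp x + pm x + pg x := (hmp.add hmm).add hmg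
  have hsint : Integrable (fun x => pp x + pm x + pg x) μ := (hip.add him).add hig
  have hfmeas : Measurable fun x =>
      (pp x / (pp x + pm x + pg x) - 1 / 2) ^ 2 * (pp x + pm x + pg x) := by
    exact (((hmp.div hsm).sub measurable_const).pow measurable_const).mul hsm
  have hfint : Integrable (fun x =>
      (pp x / (pp x + pm x + pg x) - 1 / 2) ^ 2 * (pp x + pm x + pg x)) μ := by
    refine (hsint.const_mul (1 / 4 : ℝ)).mono' hfmeas.aestronglyMeasurable ?_
    filter_upwards with x
    have hs0 : 0 ≤ pp x + pm x + pg x := add_nonneg (add_nonneg (h0p x) (h0m x)) (h0g x)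
    have hd01 : 0 ≤ pp x / (pp x + pm x + pg x) ∧ pp x / (pp x + pm x + pg x) ≤ 1 := by
      rcases eq_or_lt_of_le hs0 with h | h
      · rw [← h, div_zero]; norm_num
      · constructor
        · exact div_nonneg (h0p x) hs0
        · rw [div_le_one h]
          nlinarith [h0m x, h0g x]
    have hsq : (pp x / (pp x + pm x + pg x) - 1 / 2) ^ 2 ≤ 1 / 4 := by
      nlinarith [hd01.1, hd01.2]
    have : |(pp x / (pp x + pm x + pg x) - 1 / 2) ^ 2 * (pp x + pm x + pg x)| =
        (pp x / (pp x + pm x + pg x) - 1 / 2) ^ 2 * (pp x + pm x + pg x) := by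
      exact abs_of_nonneg (mul_nonneg (sq_nonneg _) hs0)
    rw [Real.norm_eq_abs, this]
    nlinarith [sq_nonneg (pp x / (pp x + pm x + pg x) - 1 / 2)]
  rw [← integral_add_compl hS hfint, hcompl]
  -- integral over {pp > 0}
  have h1 : ∫ x in {x | 0 < pp x},
      (pp x / (pp x + pm x + pg x) - 1 / 2) ^ 2 * (pp x + pm x + pg x) ∂μ =
      (1 / 4) * ∫ x in {x | 0 < pp x}, (pp x - pg x) ^ 2 / (pp x + pg x) ∂μ := by
    rw [← integral_const_mul]
    refine setIntegral_congr_ae hS ?_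
    filter_upwards [hdisj] with x hx hxS
    have hpp : 0 < pp x := hxS
    have hpm : pm x = 0 := by
      rcases mul_eq_zero.1 hx with h | h
      · exact absurd h (ne_of_gt hpp)
      · exact h
    have ht : 0 < pp x + pg x := lt_of_lt_of_le hpp (by nlinarith [h0g x])
    rw [hpm, add_zero]
    field_simp
    ring
  -- integral over {pp = 0}
  have h2 : ∫ x in {x | pp x = 0},
      (pp x / (pp x + pm x + pg x) - 1 / 2) ^ 2 * (pp x + pm x + pg x) ∂μ =
      (1 / 4) * ((∫ x in {x | pp x = 0}, pm x ∂μ) + ∫ x in {x | pp x = 0}, pg x ∂μ) := by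
    have hSc : MeasurableSet {x | pp x = 0} := hmp (measurableSet_singleton 0)
    have : ∫ x in {x | pp x = 0},
        (pp x / (pp x + pm x + pg x) - 1 / 2) ^ 2 * (pp x + pm x + pg x) ∂μ =
        ∫ x in {x | pp x = 0}, (1 / 4) * (pm x + pg x) ∂μ := by
      refine setIntegral_congr_fun hSc ?_
      intro x hx
      have hpp : pp x = 0 := hx
      simp only [hpp, zero_add, zero_div]
      norm_num
    rw [this, integral_const_mul, integral_add (him.restrict) (hig.restrict)]
  -- ∫_{pp=0} pm = 1
  have h3 : ∫ x in {x | pp x = 0}, pm x ∂μ = 1 := by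
    have hz : ∫ x in {x | 0 < pp x}, pm x ∂μ = 0 := by
      have h0 : ∀ᵐ x ∂(μ.restrict {x | 0 < pp x}), pm x = 0 := by
        rw [ae_restrict_iff' hS]
        filter_upwards [hdisj] with x hx hxS
        exact (mul_eq_zero.1 hx).resolve_left (ne_of_gt hxS)
      exact integral_eq_zero_of_ae h0
    have := integral_add_compl hS him
    rw [hcompl, hz, hm1, zero_add] at this
    exact this
  rw [h1, h2, h3]
  ring
end

section
/- Let (Ω, 𝒜, μ) be a measure space and let p⁺, p⁻, p_G : Ω → ℝ be densities, i.e., measurable, nonnegative, integrable, each with integral 1 with respect to μ. Assume p⁺(x)·p⁻(x) = 0 for μ-almost every x (disjoint supports of the normal and anomalous data distributions). Define D*(x) = p⁺(x)/(p⁺(x) + p⁻(x) + p_G(x)) (with value 0 when the denominator is 0) and V = ∫ (D*(x) − 1/2)²·(p⁺(x) + p⁻(x) + p_G(x)) dμ(x). Then V ≥ 1/4, and V = 1/4 if and only if p_G = p⁺ μ-almost everywhere. (Theorem 1: under disjoint supports, the generator–encoder objective of the anomaly-aware bidirectional GAN, evaluated at the optimal discriminator, is minimized exactly when the generator-induced distribution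 equals the normal-data distribution, p_G(x,z) = p_E⁺(x,z).) -/
open MeasureTheory

private lemma key_alg (a b c : ℝ) (ha : 0 ≤ a) (hb : 0 ≤ b) (hc : 0 ≤ c)
    (hab : a * b = 0) :
    (a / (a + b + c) - 1 / 2) ^ 2 * (a + b + c)
      = (a - c) ^ 2 / (4 * (a + c)) + b / 4 := by
  rcases mul_eq_zero.mp hab with h | h
  · -- a = 0
    subst h
    rcases eq_or_lt_of_le hc with hc0 | hc0
    · rw [← hc0]; simp; ring
    · have : (0 - c) ^ 2 / (4 * (0 + c)) = c / 4 := by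
        field_simp; ring
      rw [this]
      have hbc : 0 < b + c := by linarith
      have h0 : (0:ℝ) + b + c = b + c := by ring
      rw [h0]
      field_simp
      ring
  · -- b = 0
    subst h
    rcases eq_or_lt_of_le (add_nonneg ha hc) with hac | hac
    · have ha0 : a = 0 := by linarith
      have hc0 : c = 0 := by linarith
      simp [ha0, hc0]
    · have h0 : a + 0 + c = a + c := by ring
      rw [h0]
      field_simp
      ring

private lemma key_bound (a c : ℝ) (ha : 0 ≤ a) (hc : 0 ≤ c) :
    (a - c) ^ 2 / (4 * (a + c)) ≤ (a + c) / 4 := by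
  rcases eq_or_lt_of_le (add_nonneg ha hc) with hac | hac
  · rw [← hac]; simp
  · rw [div_le_iff₀ (by linarith : (0:ℝ) < 4 * (a + c))]
    nlinarith [mul_nonneg ha hc]

private lemma key_zero (a c : ℝ) (ha : 0 ≤ a) (hc : 0 ≤ c) :
    (a - c) ^ 2 / (4 * (a + c)) = 0 ↔ c = a := by
  constructor
  · intro h
    rcases div_eq_zero_iff.mp h with h | h
    · have := pow_eq_zero_iff (n := 2) (by norm_num) |>.mp h
      linarith
    · have : a + c = 0 := by linarith
      have ha0 : a = 0 := by linarith
      have hc0 : c = 0 := by linarith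
      rw [ha0, hc0]
  · intro h; rw [h]; simp

/-- Theorem 1: for densities `p⁺, p⁻, p_G` with disjoint supports (`p⁺·p⁻ = 0` μ-a.e.),
the generator–encoder objective of the anomaly-aware bidirectional GAN at the optimal
discriminator `D* = p⁺/(p⁺ + p⁻ + p_G)` (value `0` where the denominator vanishes),
`V = ∫ (D* − 1/2)²·(p⁺ + p⁻ + p_G) dμ`, satisfies `V ≥ 1/4`, with equality iff
`p_G = p⁺` μ-almost everywhere. -/
theorem anomaly_aware_objective_min_iff
    {Ω : Type*} [MeasurableSpace Ω] (μ : Measure Ω)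
    (pp pm pg : Ω → ℝ) (hmp : Measurable pp) (hmm : Measurable pm) (hmg : Measurable pg)
    (h0p : ∀ x, 0 ≤ pp x) (h0m : ∀ x, 0 ≤ pm x) (h0g : ∀ x, 0 ≤ pg x)
    (hip : Integrable pp μ) (him : Integrable pm μ) (hig : Integrable pg μ)
    (hp1 : ∫ x, pp x ∂μ = 1) (hm1 : ∫ x, pm x ∂μ = 1) (hg1 : ∫ x, pg x ∂μ = 1)
    (hdisj : ∀ᵐ x ∂μ, pp x * pm x = 0)
    (Dstar : Ω → ℝ) (hDstar : ∀ x, Dstar x = pp x / (pp x + pm x + pg x))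
    (V : ℝ) (hV : V = ∫ x, (Dstar x - 1 / 2) ^ 2 * (pp x + pm x + pg x) ∂μ) :
    1 / 4 ≤ V ∧ (V = 1 / 4 ↔ pg =ᵐ[μ] pp) := by
  set q : Ω → ℝ := fun x => (pp x - pg x) ^ 2 / (4 * (pp x + pg x)) with hq
  have hqm : Measurable q := (((hmp.sub hmg).pow_const 2)).div
    ((measurable_const.mul (hmp.add hmg)))
  have hq0 : ∀ x, 0 ≤ q x := fun x => by
    apply div_nonneg (sq_nonneg _)
    have := h0p x; have := h0g x; linarith
  have hqint : Integrable q μ := by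
    refine Integrable.mono' (((hip.add hig).div_const 4)) hqm.aestronglyMeasurable ?_
    filter_upwards with x
    rw [Real.norm_of_nonneg (hq0 x)]
    exact key_bound (pp x) (pg x) (h0p x) (h0g x)
  have hcongr : (fun x => (Dstar x - 1 / 2) ^ 2 * (pp x + pm x + pg x))
      =ᵐ[μ] fun x => q x + pm x / 4 := by
    filter_upwards [hdisj] with x hx
    rw [hDstar x]
    exact key_alg (pp x) (pm x) (pg x) (h0p x) (h0m x) (h0g x) hx
  have hVeq : V = ∫ x, q x ∂μ + 1 / 4 := by
    rw [hV, integral_congr_ae hcongr, integral_add hqint (him.div_const 4),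
      integral_div, hm1]
  have hqpos : 0 ≤ ∫ x, q x ∂μ :=
    integral_nonneg hq0
  constructor
  · linarith
  · rw [hVeq]
    constructor
    · intro h
      have hz : ∫ x, q x ∂μ = 0 := by linarith
      have := (integral_eq_zero_iff_of_nonneg hq0 hqint).mp hz
      filter_upwards [this] with x hx
      exact (key_zero (pp x) (pg x) (h0p x) (h0g x)).mp hx
    · intro h
      have hz : q =ᵐ[μ] 0 := by
        filter_upwards [h] with x hx
        show q x = 0
        exact (key_zero (pp x) (pg x) (h0p x) (h0g x)).mpr hx
      rw [integral_congr_ae hz]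
      simp
end

section
/- Let (Ω, 𝒜, μ) be a measure space, let p⁺, p⁻, p_G : Ω → ℝ be measurable and nonnegative, and let a, b be real numbers. Define D* : Ω → ℝ by D*(x) = (a·p⁺(x) + ((a+b)/2)·p⁻(x) + b·p_G(x))/(p⁺(x) + p⁻(x) + p_G(x)) when the denominator is positive and D*(x) = 0 otherwise. Then for every measurable D : Ω → ℝ, the lower Lebesgue integral ∫⁻ ((D(x) − a)²·p⁺(x) + (D(x) − (a+b)/2)²·p⁻(x) + (D(x) − b)²·p_G(x)) dμ(x) is at least the same expression with D replaced by D*. That is, D* minimizes the anomaly-aware discriminator objective with targets a, (a+b)/2, b over all measurable discriminators. -/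
open MeasureTheory

lemma key_pointwise (pp pm pg a b t : ℝ) (h0p : 0 ≤ pp) (h0m : 0 ≤ pm) (h0g : 0 ≤ pg) :
    let ts := (a * pp + ((a + b) / 2) * pm + b * pg) / (pp + pm + pg)
    (ts - a) ^ 2 * pp + (ts - (a + b) / 2) ^ 2 * pm + (ts - b) ^ 2 * pg ≤
      (t - a) ^ 2 * pp + (t - (a + b) / 2) ^ 2 * pm + (t - b) ^ 2 * pg := by
  intro ts
  rcases eq_or_lt_of_le (by positivity : (0:ℝ) ≤ pp + pm + pg) with hs | hs
  · have hp : pp = 0 := by linarith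
    have hm : pm = 0 := by linarith
    have hg : pg = 0 := by linarith
    simp [hp, hm, hg]
  · have hts : ts * (pp + pm + pg) = a * pp + ((a + b) / 2) * pm + b * pg := by
      simp only [ts]
      field_simp
    have h2 : (t - ts) * (ts * (pp + pm + pg)) =
        (t - ts) * (a * pp + ((a + b) / 2) * pm + b * pg) := by rw [hts]
    nlinarith [mul_nonneg hs.le (sq_nonneg (t - ts)), h2]

/-- The discriminator
`D*(x) = (a·p⁺(x) + ((a+b)/2)·p⁻(x) + b·p_G(x))/(p⁺(x) + p⁻(x) + p_G(x))`
(value `0` where the denominator vanishes, Lean's division convention) minimizes the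
anomaly-aware discriminator objective with targets `a, (a+b)/2, b`,
`∫⁻ ((D − a)²·p⁺ + (D − (a+b)/2)²·p⁻ + (D − b)²·p_G) dμ`,
over all measurable discriminators. -/
theorem general_anomaly_aware_optimal_discriminator
    {Ω : Type*} [MeasurableSpace Ω] (μ : Measure Ω)
    (pp pm pg : Ω → ℝ) (hmp : Measurable pp) (hmm : Measurable pm) (hmg : Measurable pg)
    (h0p : ∀ x, 0 ≤ pp x) (h0m : ∀ x, 0 ≤ pm x) (h0g : ∀ x, 0 ≤ pg x)
    (a b : ℝ)
    (Dstar : Ω → ℝ)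
    (hDstar : ∀ x, Dstar x =
      (a * pp x + ((a + b) / 2) * pm x + b * pg x) / (pp x + pm x + pg x))
    (D : Ω → ℝ) (hD : Measurable D) :
    ∫⁻ x, ENNReal.ofReal
        ((Dstar x - a) ^ 2 * pp x + (Dstar x - (a + b) / 2) ^ 2 * pm x +
          (Dstar x - b) ^ 2 * pg x) ∂μ ≤
      ∫⁻ x, ENNReal.ofReal
        ((D x - a) ^ 2 * pp x + (D x - (a + b) / 2) ^ 2 * pm x +
          (D x - b) ^ 2 * pg x) ∂μ := by
  apply lintegral_mono
  intro x
  apply ENNReal.ofReal_le_ofReal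
  rw [hDstar x]
  exact key_pointwise (pp x) (pm x) (pg x) a b (D x) (h0p x) (h0m x) (h0g x)
end

section
/- Let (Ω, 𝒜, μ) be a measure space and let p⁺, p⁻, p_G : Ω → ℝ be densities, i.e., measurable, nonnegative, integrable, each with integral 1 with respect to μ. Let a, b, c be real numbers. Define D*(x) = (a·p⁺(x) + ((a+b)/2)·p⁻(x) + b·p_G(x))/(p⁺(x) + p⁻(x) + p_G(x)) (with value 0 when the denominator is 0), and V = ∫ (D*(x) − c)²·(p⁺(x) + p⁻(x) + p_G(x)) dμ(x). Then V ≥ 3·((a + b)/2 − c)². (Lower bound in Theorem 2: the generator–encoder objective of the anomaly-aware bidirectional GAN with general targets, evaluated at the optimal discriminator, is at least 3·((a+b)/2 − c)², without any disjoint-support assumption.) -/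
open MeasureTheory

/-- Lower bound in Theorem 2: for densities `p⁺, p⁻, p_G` and real targets `a, b, c`,
the generator–encoder objective at the optimal discriminator
`D* = (a·p⁺ + ((a+b)/2)·p⁻ + b·p_G)/(p⁺ + p⁻ + p_G)` (value `0` where the
denominator vanishes), `V = ∫ (D* − c)²·(p⁺ + p⁻ + p_G) dμ`, satisfies
`V ≥ 3·((a + b)/2 − c)²`. -/
theorem general_anomaly_aware_objective_lower_bound
    {Ω : Type*} [MeasurableSpace Ω] (μ : Measure Ω)
    (pp pm pg : Ω → ℝ) (hmp : Measurable pp) (hmm : Measurable pm) (hmg : Measurable pg)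
    (h0p : ∀ x, 0 ≤ pp x) (h0m : ∀ x, 0 ≤ pm x) (h0g : ∀ x, 0 ≤ pg x)
    (hip : Integrable pp μ) (him : Integrable pm μ) (hig : Integrable pg μ)
    (hp1 : ∫ x, pp x ∂μ = 1) (hm1 : ∫ x, pm x ∂μ = 1) (hg1 : ∫ x, pg x ∂μ = 1)
    (a b c : ℝ)
    (Dstar : Ω → ℝ)
    (hDstar : ∀ x, Dstar x =
      (a * pp x + ((a + b) / 2) * pm x + b * pg x) / (pp x + pm x + pg x))
    (V : ℝ) (hV : V = ∫ x, (Dstar x - c) ^ 2 * (pp x + pm x + pg x) ∂μ) :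
    3 * ((a + b) / 2 - c) ^ 2 ≤ V := by
  set α : ℝ := (a + b) / 2 - c with hα
  have hs0 : ∀ x, 0 ≤ pp x + pm x + pg x := fun x => by
    have := h0p x; have := h0m x; have := h0g x; linarith
  have hsint : Integrable (fun x => pp x + pm x + pg x) μ := (hip.add him).add hig
  set K : ℝ := |a| + |(a + b) / 2| + |b| + |c| with hK
  -- key identity: (D* - c) * s = a p⁺ + m p⁻ + b p_G - c s
  have hkey : ∀ x, (Dstar x - c) * (pp x + pm x + pg x)
      = a * pp x + ((a + b) / 2) * pm x + b * pg x - c * (pp x + pm x + pg x) := by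
    intro x
    rcases eq_or_lt_of_le (hs0 x) with h | h
    · have h1 : pp x = 0 := by have := h0p x; have := h0m x; have := h0g x; linarith
      have h2 : pm x = 0 := by have := h0p x; have := h0m x; have := h0g x; linarith
      have h3 : pg x = 0 := by have := h0p x; have := h0m x; have := h0g x; linarith
      simp [h1, h2, h3]
    · rw [hDstar x]
      field_simp
  -- boundedness of D* - c
  have hDb : ∀ x, |Dstar x - c| ≤ K := by
    intro x
    rcases eq_or_lt_of_le (hs0 x) with h | h
    · have h1 : pp x = 0 := by have := h0p x; have := h0m x; have := h0g x; linarith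
      have h2 : pm x = 0 := by have := h0p x; have := h0m x; have := h0g x; linarith
      have h3 : pg x = 0 := by have := h0p x; have := h0m x; have := h0g x; linarith
      rw [hDstar x, h1, h2, h3]
      simp only [mul_zero, add_zero, zero_add, zero_div, zero_sub, abs_neg]
      have := abs_nonneg a; have := abs_nonneg ((a + b) / 2); have := abs_nonneg b
      rw [hK]; linarith
    · have hK0 : a * pp x + ((a + b) / 2) * pm x + b * pg x
          ≤ (|a| + |(a + b) / 2| + |b|) * (pp x + pm x + pg x) := by
        have h1 : a * pp x ≤ |a| * pp x :=
          mul_le_mul_of_nonneg_right (le_abs_self a) (h0p x)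
        have h2 : ((a + b) / 2) * pm x ≤ |(a + b) / 2| * pm x :=
          mul_le_mul_of_nonneg_right (le_abs_self _) (h0m x)
        have h3 : b * pg x ≤ |b| * pg x :=
          mul_le_mul_of_nonneg_right (le_abs_self b) (h0g x)
        have := mul_nonneg (abs_nonneg a) (add_nonneg (h0m x) (h0g x))
        have := mul_nonneg (abs_nonneg ((a + b) / 2)) (add_nonneg (h0p x) (h0g x))
        have := mul_nonneg (abs_nonneg b) (add_nonneg (h0p x) (h0m x))
        nlinarith
      have hK1 : -((|a| + |(a + b) / 2| + |b|) * (pp x + pm x + pg x))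
          ≤ a * pp x + ((a + b) / 2) * pm x + b * pg x := by
        have h1 : -|a| * pp x ≤ a * pp x :=
          mul_le_mul_of_nonneg_right (neg_abs_le a) (h0p x)
        have h2 : -|(a + b) / 2| * pm x ≤ ((a + b) / 2) * pm x :=
          mul_le_mul_of_nonneg_right (neg_abs_le _) (h0m x)
        have h3 : -|b| * pg x ≤ b * pg x :=
          mul_le_mul_of_nonneg_right (neg_abs_le b) (h0g x)
        have := mul_nonneg (abs_nonneg a) (add_nonneg (h0m x) (h0g x))
        have := mul_nonneg (abs_nonneg ((a + b) / 2)) (add_nonneg (h0p x) (h0g x))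
        have := mul_nonneg (abs_nonneg b) (add_nonneg (h0p x) (h0m x))
        nlinarith
      have hq1 : (a * pp x + ((a + b) / 2) * pm x + b * pg x) / (pp x + pm x + pg x)
          ≤ |a| + |(a + b) / 2| + |b| := (div_le_iff₀ h).mpr hK0
      have hq2 : -(|a| + |(a + b) / 2| + |b|)
          ≤ (a * pp x + ((a + b) / 2) * pm x + b * pg x) / (pp x + pm x + pg x) := by
        rw [le_div_iff₀ h]; linarith
      rw [hDstar x, abs_le]
      have := le_abs_self c; have := neg_abs_le c
      constructor <;> linarith
  -- measurability of D*
  have hDm : Measurable Dstar := by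
    have hfe : Dstar = fun x =>
        (a * pp x + ((a + b) / 2) * pm x + b * pg x) / (pp x + pm x + pg x) :=
      funext hDstar
    rw [hfe]
    exact (((hmp.const_mul a).add (hmm.const_mul _)).add (hmg.const_mul b)).div
      ((hmp.add hmm).add hmg)
  -- integrability of the objective integrand
  have hfi : Integrable (fun x => (Dstar x - c) ^ 2 * (pp x + pm x + pg x)) μ := by
    refine (hsint.const_mul (K ^ 2)).mono' ?_ ?_
    · exact (((hDm.sub measurable_const).pow measurable_const).mul
        ((hmp.add hmm).add hmg)).aestronglyMeasurable
    · filter_upwards with x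
      have h1 := hDb x
      have h2 := hs0 x
      have h3 : (Dstar x - c) ^ 2 ≤ K ^ 2 := by
        rcases abs_le.mp h1 with ⟨hl, hr⟩
        exact sq_le_sq' hl hr
      rw [Real.norm_eq_abs, abs_of_nonneg (mul_nonneg (sq_nonneg _) h2)]
      exact mul_le_mul_of_nonneg_right h3 h2
  -- lower-bounding integrand
  set C1 : ℝ := 2 * α * (a - c) - α ^ 2 with hC1
  set C2 : ℝ := 2 * α * ((a + b) / 2 - c) - α ^ 2 with hC2
  set C3 : ℝ := 2 * α * (b - c) - α ^ 2 with hC3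
  have hlow_int : Integrable (fun x => C1 * pp x + C2 * pm x + C3 * pg x) μ :=
    ((hip.const_mul C1).add (him.const_mul C2)).add (hig.const_mul C3)
  have hpt : ∀ x, C1 * pp x + C2 * pm x + C3 * pg x
      ≤ (Dstar x - c) ^ 2 * (pp x + pm x + pg x) := by
    intro x
    have h1 : (2 * α * (Dstar x - c) - α ^ 2) * (pp x + pm x + pg x)
        ≤ (Dstar x - c) ^ 2 * (pp x + pm x + pg x) := by
      apply mul_le_mul_of_nonneg_right _ (hs0 x)
      nlinarith [sq_nonneg (Dstar x - c - α)]
    calc C1 * pp x + C2 * pm x + C3 * pg x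
        = 2 * α * ((Dstar x - c) * (pp x + pm x + pg x)) - α ^ 2 * (pp x + pm x + pg x) := by
          rw [hkey x, hC1, hC2, hC3]; ring
      _ = (2 * α * (Dstar x - c) - α ^ 2) * (pp x + pm x + pg x) := by ring
      _ ≤ (Dstar x - c) ^ 2 * (pp x + pm x + pg x) := h1
  have hmono : ∫ x, (C1 * pp x + C2 * pm x + C3 * pg x) ∂μ
      ≤ ∫ x, (Dstar x - c) ^ 2 * (pp x + pm x + pg x) ∂μ :=
    integral_mono hlow_int hfi hpt
  have hi1 : Integrable (fun x => C1 * pp x) μ := hip.const_mul C1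
  have hi2 : Integrable (fun x => C2 * pm x) μ := him.const_mul C2
  have hi3 : Integrable (fun x => C3 * pg x) μ := hig.const_mul C3
  have hi12 : Integrable (fun x => C1 * pp x + C2 * pm x) μ := hi1.add hi2
  have hcomp : ∫ x, (C1 * pp x + C2 * pm x + C3 * pg x) ∂μ = C1 + C2 + C3 := by
    rw [integral_add hi12 hi3, integral_add hi1 hi2,
      integral_const_mul, integral_const_mul, integral_const_mul, hp1, hm1, hg1]
    ring
  have hfinal : 3 * ((a + b) / 2 - c) ^ 2 = C1 + C2 + C3 := by
    rw [hC1, hC2, hC3, hα]; ring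
  rw [hV]
  calc 3 * ((a + b) / 2 - c) ^ 2 = C1 + C2 + C3 := hfinal
    _ = ∫ x, (C1 * pp x + C2 * pm x + C3 * pg x) ∂μ := hcomp.symm
    _ ≤ _ := hmono
end

section
/- Let (Ω, 𝒜, μ) be a measure space and let p⁺, p⁻, p_G : Ω → ℝ be densities, i.e., measurable, nonnegative, integrable, each with integral 1 with respect to μ. Let a, b, c be real numbers. Define D*(x) = (a·p⁺(x) + ((a+b)/2)·p⁻(x) + b·p_G(x))/(p⁺(x) + p⁻(x) + p_G(x)) (with value 0 when the denominator is 0), and V = ∫ (D*(x) − c)²·(p⁺(x) + p⁻(x) + p_G(x)) dμ(x). If p_G = p⁺ μ-almost everywhere, then V = 3·((a + b)/2 − c)². (Attainment of the minimum in Theorem 2: when the generator-induced distribution equals the normal-data distribution, D* = (a+b)/2 on the support and the generator–encoder objective equals its lower bound 3·((a+b)/2 − c)².) -/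
open MeasureTheory

/-- Attainment of the minimum in Theorem 2: for densities `p⁺, p⁻, p_G` and real
targets `a, b, c`, with `D* = (a·p⁺ + ((a+b)/2)·p⁻ + b·p_G)/(p⁺ + p⁻ + p_G)`
(value `0` where the denominator vanishes) and
`V = ∫ (D* − c)²·(p⁺ + p⁻ + p_G) dμ`: if `p_G = p⁺` μ-a.e. then
`V = 3·((a + b)/2 − c)²`. -/
theorem general_anomaly_aware_objective_attained
    {Ω : Type*} [MeasurableSpace Ω] (μ : Measure Ω)
    (pp pm pg : Ω → ℝ) (hmp : Measurable pp) (hmm : Measurable pm) (hmg : Measurable pg)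
    (h0p : ∀ x, 0 ≤ pp x) (h0m : ∀ x, 0 ≤ pm x) (h0g : ∀ x, 0 ≤ pg x)
    (hip : Integrable pp μ) (him : Integrable pm μ) (hig : Integrable pg μ)
    (hp1 : ∫ x, pp x ∂μ = 1) (hm1 : ∫ x, pm x ∂μ = 1) (hg1 : ∫ x, pg x ∂μ = 1)
    (a b c : ℝ)
    (Dstar : Ω → ℝ)
    (hDstar : ∀ x, Dstar x =
      (a * pp x + ((a + b) / 2) * pm x + b * pg x) / (pp x + pm x + pg x))
    (V : ℝ) (hV : V = ∫ x, (Dstar x - c) ^ 2 * (pp x + pm x + pg x) ∂μ)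
    (heq : pg =ᵐ[μ] pp) :
    V = 3 * ((a + b) / 2 - c) ^ 2 := by
  have key : (fun x => (Dstar x - c) ^ 2 * (pp x + pm x + pg x)) =ᵐ[μ]
      (fun x => ((a + b) / 2 - c) ^ 2 * (pp x + pm x + pg x)) := by
    filter_upwards [heq] with x hx
    by_cases hS : pp x + pm x + pg x = 0
    · simp [hS]
    · have hS' : pp x + pm x + pp x ≠ 0 := by rw [hx] at hS; exact hS
      have hD : Dstar x = (a + b) / 2 := by
        rw [hDstar x, hx, div_eq_iff hS']; ring
      rw [hD]
  rw [hV, integral_congr_ae key, integral_const_mul]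
  have h3 : ∫ x, (pp x + pm x + pg x) ∂μ = 3 := by
    have h := integral_add (hip.add him) hig
    simp only [Pi.add_apply] at h
    rw [h, integral_add hip him, hp1, hm1, hg1]; norm_num
  rw [h3]; ring
end

section
/- Let (Ω, 𝒜, μ) be a measure space and let p⁺, p⁻, p_G : Ω → ℝ be densities, i.e., measurable, nonnegative, integrable, each with integral 1 with respect to μ. Let a, b, c be real numbers with a ≠ b. Define D*(x) = (a·p⁺(x) + ((a+b)/2)·p⁻(x) + b·p_G(x))/(p⁺(x) + p⁻(x) + p_G(x)) (with value 0 when the denominator is 0), and V = ∫ (D*(x) − c)²·(p⁺(x) + p⁻(x) + p_G(x)) dμ(x). If V = 3·((a + b)/2 − c)², then p_G = p⁺ μ-almost everywhere. (Uniqueness part of Theorem 2: when a ≠ b, equality in the Jensen bound forces D* = (a+b)/2 almost everywhere on the support of p⁺ + p⁻ + p_G, which in turn forces the generator-induced distribution to equal the normal-data distribution, p_G(x,z) = p_E⁺(x,z).) -/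
open MeasureTheory

/-- Uniqueness part of Theorem 2: for densities `p⁺, p⁻, p_G` and real targets
`a, b, c` with `a ≠ b`, with
`D* = (a·p⁺ + ((a+b)/2)·p⁻ + b·p_G)/(p⁺ + p⁻ + p_G)` (value `0` where the
denominator vanishes) and `V = ∫ (D* − c)²·(p⁺ + p⁻ + p_G) dμ`: if
`V = 3·((a + b)/2 − c)²` then `p_G = p⁺` μ-almost everywhere. -/
theorem general_anomaly_aware_objective_unique
    {Ω : Type*} [MeasurableSpace Ω] (μ : Measure Ω)
    (pp pm pg : Ω → ℝ) (hmp : Measurable pp) (hmm : Measurable pm) (hmg : Measurable pg)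
    (h0p : ∀ x, 0 ≤ pp x) (h0m : ∀ x, 0 ≤ pm x) (h0g : ∀ x, 0 ≤ pg x)
    (hip : Integrable pp μ) (him : Integrable pm μ) (hig : Integrable pg μ)
    (hp1 : ∫ x, pp x ∂μ = 1) (hm1 : ∫ x, pm x ∂μ = 1) (hg1 : ∫ x, pg x ∂μ = 1)
    (a b c : ℝ) (hab : a ≠ b)
    (Dstar : Ω → ℝ)
    (hDstar : ∀ x, Dstar x =
      (a * pp x + ((a + b) / 2) * pm x + b * pg x) / (pp x + pm x + pg x))
    (V : ℝ) (hV : V = ∫ x, (Dstar x - c) ^ 2 * (pp x + pm x + pg x) ∂μ)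
    (hmin : V = 3 * ((a + b) / 2 - c) ^ 2) :
    pg =ᵐ[μ] pp := by
  set m : ℝ := (a + b) / 2 with hm
  set s : Ω → ℝ := fun x => pp x + pm x + pg x with hsdef
  set n : Ω → ℝ := fun x => a * pp x + m * pm x + b * pg x with hndef
  have hs0 : ∀ x, 0 ≤ s x := fun x => by
    have := h0p x; have := h0m x; have := h0g x
    simp only [hsdef]; linarith
  have hzero : ∀ x, s x = 0 → pp x = 0 ∧ pm x = 0 ∧ pg x = 0 := by
    intro x hx
    have := h0p x; have := h0m x; have := h0g x
    simp only [hsdef] at hx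
    refine ⟨by linarith, by linarith, by linarith⟩
  have hDs : ∀ x, Dstar x * s x = n x := by
    intro x
    by_cases h : s x = 0
    · obtain ⟨h1, h2, h3⟩ := hzero x h
      simp [hndef, h1, h2, h3, h]
    · rw [hDstar x]
      exact div_mul_cancel₀ _ h
  -- measurability and boundedness of Dstar
  have hDeq : Dstar = fun x => n x / s x := funext fun x => hDstar x
  have hsmeas : Measurable s := (hmp.add hmm).add hmg
  have hnmeas : Measurable n :=
    ((hmp.const_mul a).add (hmm.const_mul m)).add (hmg.const_mul b)
  have hDmeas : Measurable Dstar := by rw [hDeq]; exact hnmeas.div hsmeas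
  set M : ℝ := |a| + |b| with hM
  have hM0 : 0 ≤ M := by positivity
  have hnb : ∀ x, |n x| ≤ M * s x := by
    intro x
    have h1 := h0p x; have h2 := h0m x; have h3 := h0g x
    have hma : |m| ≤ M := by
      rw [hm, hM]
      calc |(a + b) / 2| = |a + b| / 2 := by rw [abs_div]; norm_num
        _ ≤ (|a| + |b|) / 2 := by gcongr; exact abs_add_le a b
        _ ≤ |a| + |b| := by linarith [abs_nonneg a, abs_nonneg b]
    have haM : |a| ≤ M := by rw [hM]; linarith [abs_nonneg b]
    have hbM : |b| ≤ M := by rw [hM]; linarith [abs_nonneg a]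
    calc |n x| ≤ |a * pp x| + |m * pm x| + |b * pg x| := by
          simp only [hndef]
          exact (abs_add_le _ _).trans (by gcongr; exact abs_add_le _ _)
      _ = |a| * pp x + |m| * pm x + |b| * pg x := by
          rw [abs_mul, abs_mul, abs_mul, abs_of_nonneg h1, abs_of_nonneg h2,
            abs_of_nonneg h3]
      _ ≤ M * pp x + M * pm x + M * pg x := by gcongr
      _ = M * s x := by simp only [hsdef]; ring
  have hDb : ∀ x, |Dstar x| ≤ M := by
    intro x
    by_cases h : s x = 0
    · rw [hDeq]
      simp [h, hM0]
    · have hspos : 0 < s x := lt_of_le_of_ne (hs0 x) (Ne.symm h)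
      rw [hDeq]
      simp only
      rw [abs_div, abs_of_pos hspos, div_le_iff₀ hspos]
      exact hnb x
  -- integrability
  have his : Integrable s μ := (hip.add him).add hig
  have hIs : ∫ x, s x ∂μ = 3 := by
    simp only [hsdef]
    rw [integral_add (μ := μ) (f := fun x => pp x + pm x) (hip.add him) hig,
      integral_add hip him, hp1, hm1, hg1]
    norm_num
  have hin : Integrable n μ :=
    ((hip.const_mul a).add (him.const_mul m)).add (hig.const_mul b)
  have hIn : ∫ x, n x ∂μ = 3 * m := by
    simp only [hndef]
    rw [integral_add (μ := μ) (f := fun x => a * pp x + m * pm x)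
        ((hip.const_mul a).add (him.const_mul m)) (hig.const_mul b),
      integral_add (hip.const_mul a) (him.const_mul m),
      integral_const_mul, integral_const_mul, integral_const_mul, hp1, hm1, hg1, hm]
    ring
  set f : Ω → ℝ := fun x => (Dstar x - c) ^ 2 * s x with hfdef
  have hfint : Integrable f μ := by
    refine Integrable.mono' (his.const_mul ((M + |c|) ^ 2))
      ((((hDmeas.sub measurable_const).pow measurable_const).mul
        hsmeas).aestronglyMeasurable) (Filter.Eventually.of_forall fun x => ?_)
    have h1 : |Dstar x - c| ≤ M + |c| := by
      calc |Dstar x - c| ≤ |Dstar x| + |c| := abs_sub _ _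
        _ ≤ M + |c| := by gcongr; exact hDb x
    have h2 : (Dstar x - c) ^ 2 ≤ (M + |c|) ^ 2 := by
      rw [← sq_abs]
      gcongr
    simp only [hfdef]
    rw [Real.norm_eq_abs, abs_mul, abs_of_nonneg (hs0 x), abs_of_nonneg (sq_nonneg _)]
    exact mul_le_mul_of_nonneg_right h2 (hs0 x)
  have hIf : ∫ x, f x ∂μ = 3 * (m - c) ^ 2 := by
    simp only [hfdef]
    rw [← hV, hmin]
  -- the key nonnegative function with zero integral
  set g : Ω → ℝ := fun x => (Dstar x - m) ^ 2 * s x with hgdef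
  have hgf : ∀ x, g x = f x + (c - m) * (2 * n x - (m + c) * s x) := by
    intro x
    rw [← hDs x]
    simp only [hgdef, hfdef]
    ring
  have haux : Integrable (fun x => (c - m) * (2 * n x - (m + c) * s x)) μ :=
    (((hin.const_mul 2).sub (his.const_mul (m + c))).const_mul (c - m))
  have hgint : Integrable g μ := by
    have : g = fun x => f x + (c - m) * (2 * n x - (m + c) * s x) := funext hgf
    rw [this]
    exact hfint.add haux
  have hIg : ∫ x, g x ∂μ = 0 := by
    have : g = fun x => f x + (c - m) * (2 * n x - (m + c) * s x) := funext hgf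
    rw [this, integral_add hfint haux, hIf, integral_const_mul,
      integral_sub (hin.const_mul 2) (his.const_mul (m + c)),
      integral_const_mul, integral_const_mul, hIn, hIs]
    ring
  have hg0 : g =ᵐ[μ] 0 := by
    refine (integral_eq_zero_iff_of_nonneg (fun x => ?_) hgint).mp hIg
    exact mul_nonneg (sq_nonneg _) (hs0 x)
  -- conclude
  filter_upwards [hg0] with x hx
  simp only [hgdef, Pi.zero_apply] at hx
  rcases mul_eq_zero.mp hx with h | h
  · have hDm : Dstar x = m := by
      have := pow_eq_zero_iff (n := 2) (by norm_num) |>.mp h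
      linarith [this]
    have heq : n x = m * s x := by rw [← hDs x, hDm]
    simp only [hndef, hsdef, hm] at heq
    have hab' : a - b ≠ 0 := sub_ne_zero.mpr hab
    have h2 : (a - b) * pg x = (a - b) * pp x := by linarith
    exact mul_left_cancel₀ hab' h2
  · obtain ⟨h1, _, h3⟩ := hzero x h
    rw [h1, h3]
end
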